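/- arXiv:math/0305156 — 2 statements merged into one kernel-verified Lean document; each statement's English description precedes it below -/
import Mathlib

section
/- Let k ≥ 1, n = 2k+1, and β = σ_2 σ_4² σ_6³ ⋯ σ_{2k}^k ∈ B_n (the product over i = 1,…,k of σ_{2i}^i). Then every subset S of B_n whose generated subgroup equals the centralizer Z(β) has at least k(k+3)/2 elements. -/
/-- The braid relations on `n` strands. Generators are indexed by `Fin (n-1)`,
with index `i` representing the Artin generator `σ_{i+1}`. -/
def braidRels (n : ℕ) : Set (FreeGroup (Fin (n - 1))) :=
  { r | (∃ i j : Fin (n - 1), (i : ℕ) + 1 = (j : ℕ) ∧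
          r = FreeGroup.of i * FreeGroup.of j * FreeGroup.of i *
              (FreeGroup.of j * FreeGroup.of i * FreeGroup.of j)⁻¹) ∨
        (∃ i j : Fin (n - 1), (i : ℕ) + 2 ≤ (j : ℕ) ∧
          r = FreeGroup.of i * FreeGroup.of j * (FreeGroup.of j * FreeGroup.of i)⁻¹) }

/-- The Artin braid group on `n` strands. -/
def BraidGroup (n : ℕ) : Type := PresentedGroup (braidRels n)

instance (n : ℕ) : Group (BraidGroup n) :=
  inferInstanceAs (Group (PresentedGroup (braidRels n)))

/-- `braidGen n i` is the Artin generator `σ_i ∈ B_n`, for `1 ≤ i ≤ n-1`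
(junk value `1` outside this range). -/
def braidGen (n : ℕ) (i : ℕ) : BraidGroup n :=
  if h : i - 1 < n - 1 then PresentedGroup.of (⟨i - 1, h⟩ : Fin (n - 1)) else 1

/-- Replacement for the removed Mathlib lemma `Equiv.Perm.apply_inv_self`. -/
theorem Equiv.Perm.apply_inv_self' {α : Type*} (f : Equiv.Perm α) (x : α) : f (f⁻¹ x) = x :=
  f.apply_symm_apply x

private lemma swap_braid {α : Type*} [DecidableEq α] {a b c : α}
    (hab : a ≠ b) (hac : a ≠ c) (hbc : b ≠ c) :
    Equiv.swap a b * Equiv.swap b c * Equiv.swap a b =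
      Equiv.swap b c * Equiv.swap a b * Equiv.swap b c :=
  calc Equiv.swap a b * Equiv.swap b c * Equiv.swap a b
      = Equiv.swap b a * Equiv.swap c b * Equiv.swap b a := by
        rw [Equiv.swap_comm a b, Equiv.swap_comm b c]
    _ = Equiv.swap a c := Equiv.swap_mul_swap_mul_swap hbc.symm hac.symm
    _ = Equiv.swap c a := Equiv.swap_comm a c
    _ = Equiv.swap b c * Equiv.swap a b * Equiv.swap b c :=
        (Equiv.swap_mul_swap_mul_swap hab hac).symm

private lemma swap_commute {α : Type*} [DecidableEq α] {a b c d : α}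
    (h1 : a ≠ c) (h2 : a ≠ d) (h3 : b ≠ c) (h4 : b ≠ d) :
    Commute (Equiv.swap a b) (Equiv.swap c d) := by
  apply Equiv.Perm.Disjoint.commute
  intro x
  by_cases hx : x = a ∨ x = b
  · right
    rcases hx with rfl | rfl
    · exact Equiv.swap_apply_of_ne_of_ne h1 h2
    · exact Equiv.swap_apply_of_ne_of_ne h3 h4
  · left
    push_neg at hx
    exact Equiv.swap_apply_of_ne_of_ne hx.1 hx.2

/-- The canonical projection `B_n → S_n` sending `σ_i` to the transposition `(i, i+1)`. -/
def braidPermHom (n : ℕ) : BraidGroup n →* Equiv.Perm (Fin n) :=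
  PresentedGroup.toGroup
    (f := fun i : Fin (n - 1) =>
      Equiv.swap (⟨i.val, by have := i.isLt; omega⟩ : Fin n)
        (⟨i.val + 1, by have := i.isLt; omega⟩ : Fin n))
    (by
      rintro r (⟨⟨i, hi⟩, ⟨j, hj⟩, hij, rfl⟩ | ⟨⟨i, hi⟩, ⟨j, hj⟩, hij, rfl⟩) <;>
        simp only [map_mul, map_inv, FreeGroup.lift_apply_of, mul_inv_eq_one]
      · subst hij
        exact swap_braid (by simp only [ne_eq, Fin.mk.injEq, Fin.val_mk]; omega)
          (by simp only [ne_eq, Fin.mk.injEq, Fin.val_mk]; omega)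
          (by simp only [ne_eq, Fin.mk.injEq, Fin.val_mk]; omega)
      · simp only [Fin.val_mk] at hij
        exact (swap_commute (by simp only [ne_eq, Fin.mk.injEq, Fin.val_mk]; omega)
          (by simp only [ne_eq, Fin.mk.injEq, Fin.val_mk]; omega)
          (by simp only [ne_eq, Fin.mk.injEq, Fin.val_mk]; omega)
          (by simp only [ne_eq, Fin.mk.injEq, Fin.val_mk]; omega)).eq)

/-- The Birman–Ko–Lee element `δ_(n) = σ_1 σ_2 ⋯ σ_{n-1} ∈ B_n`. -/
def braidDelta (n : ℕ) : BraidGroup n :=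
  ((List.range (n - 1)).map (fun j => braidGen n (j + 1))).prod

/-- The element `γ_(n) = σ_1 σ_2 ⋯ σ_{n-1} σ_1 ∈ B_n`. -/
def braidGamma (n : ℕ) : BraidGroup n := braidDelta n * braidGen n 1

/-- Garside's half twist `Δ = (σ_1)(σ_2 σ_1) ⋯ (σ_{n-1} σ_{n-2} ⋯ σ_1) ∈ B_n`. -/
def halfTwist (n : ℕ) : BraidGroup n :=
  ((List.range (n - 1)).map
    (fun r => (((List.range (r + 1)).reverse).map (fun j => braidGen n (j + 1))).prod)).prod

/-- A braid is periodic if some positive power of it is a power of the full twist `Δ²`. -/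
def IsPeriodicBraid {n : ℕ} (β : BraidGroup n) : Prop :=
  ∃ m : ℕ, 1 ≤ m ∧ ∃ l : ℤ, β ^ m = halfTwist n ^ (2 * l)

/-- The pure braid group on `n` strands: the kernel of the projection `B_n → S_n`. -/
def pureBraidGroup (n : ℕ) : Subgroup (BraidGroup n) := (braidPermHom n).ker

/-- The annular braid group on `d` strands, identified with the subgroup of `B_{d+1}`
of braids whose permutation fixes the last strand. -/
def annularBraidGroup (d : ℕ) : Subgroup (BraidGroup (d + 1)) :=
  Subgroup.comap (braidPermHom (d + 1))
    (MulAction.stabilizer (Equiv.Perm (Fin (d + 1))) (Fin.last d))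

/-- The mixed braid group associated to a partition (setoid) `P` of the strands:
braids whose permutation preserves each block of `P`. -/
def mixedBraidGroup {k : ℕ} (P : Setoid (Fin k)) : Subgroup (BraidGroup k) where
  carrier := {α | ∀ x, P.r ((braidPermHom k α) x) x}
  one_mem' := by intro x; simp only [map_one, Equiv.Perm.coe_one, id_eq]; exact P.refl x
  mul_mem' := by
    intro a b ha hb x
    simp only [map_mul, Equiv.Perm.mul_apply]
    exact P.trans (ha ((braidPermHom k b) x)) (hb x)
  inv_mem' := by
    intro a ha x
    have := ha ((braidPermHom k a)⁻¹ x)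
    simp only [map_inv] at *
    simpa [Equiv.Perm.apply_inv_self'] using P.symm this

theorem Equiv.Perm.inv_apply_self' {α : Type*} (f : Equiv.Perm α) (x : α) : f⁻¹ (f x) = x :=
  f.symm_apply_apply x

namespace BraidLower

open Equiv

/-- 0-based Artin generator: `u n r = σ_{r+1}`. -/
def u (n : ℕ) (r : ℕ) : BraidGroup n := braidGen n (r + 1)

lemma u_eq {n : ℕ} (r : ℕ) (h : r < n - 1) : u n r = PresentedGroup.of ⟨r, h⟩ := by
  simp [u, braidGen, Nat.add_sub_cancel, h]
  rfl

lemma u_eq_one {n : ℕ} (r : ℕ) (h : ¬ r < n - 1) : u n r = 1 := by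
  simp [u, braidGen, Nat.add_sub_cancel, h]

lemma rel_eq_one {n : ℕ} {r : FreeGroup (Fin (n - 1))} (h : r ∈ braidRels n) :
    PresentedGroup.mk (braidRels n) r = 1 := by
  have : r ∈ Subgroup.normalClosure (braidRels n) := Subgroup.subset_normalClosure h
  exact (QuotientGroup.eq_one_iff r).2 this

lemma braid_rel {n : ℕ} (r : ℕ) (h : r + 1 < n - 1) :
    u n r * u n (r + 1) * u n r = u n (r + 1) * u n r * u n (r + 1) := by
  have hr : r < n - 1 := by omega
  have hmem : (FreeGroup.of (⟨r, hr⟩ : Fin (n-1)) * FreeGroup.of (⟨r+1, h⟩ : Fin (n-1)) *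
      FreeGroup.of (⟨r, hr⟩ : Fin (n-1)) *
      (FreeGroup.of (⟨r+1, h⟩ : Fin (n-1)) * FreeGroup.of (⟨r, hr⟩ : Fin (n-1)) *
        FreeGroup.of (⟨r+1, h⟩ : Fin (n-1)))⁻¹) ∈ braidRels n := by
    left; exact ⟨⟨r, hr⟩, ⟨r+1, h⟩, rfl, rfl⟩
  have := rel_eq_one hmem
  rw [map_mul, map_mul, map_mul, map_inv, map_mul, map_mul, mul_inv_eq_one] at this
  rw [u_eq r hr, u_eq (r+1) h]
  exact this

lemma u_comm {n : ℕ} {r s : ℕ} (h : r + 2 ≤ s) : Commute (u n r) (u n s) := by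
  by_cases hs : s < n - 1
  · have hr : r < n - 1 := by omega
    have hmem : (FreeGroup.of (⟨r, hr⟩ : Fin (n-1)) * FreeGroup.of (⟨s, hs⟩ : Fin (n-1)) *
        (FreeGroup.of (⟨s, hs⟩ : Fin (n-1)) * FreeGroup.of (⟨r, hr⟩ : Fin (n-1)))⁻¹) ∈
        braidRels n := by
      right; exact ⟨⟨r, hr⟩, ⟨s, hs⟩, h, rfl⟩
    have := rel_eq_one hmem
    rw [map_mul, map_inv, map_mul, map_mul, mul_inv_eq_one] at this
    rw [Commute, SemiconjBy, u_eq r hr, u_eq s hs]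
    exact this
  · rw [u_eq_one s hs]
    exact Commute.one_right _

/-! ### The target group `GG n` -/

/-- matrices of linking numbers -/
abbrev VV (n : ℕ) := Fin n → Fin n → ℤ

/-- action of a permutation on `VV n` -/
def act {n : ℕ} (s : Perm (Fin n)) (v : VV n) : VV n := fun x y => v (s⁻¹ x) (s⁻¹ y)

@[simp] lemma act_apply {n : ℕ} (s : Perm (Fin n)) (v : VV n) (x y : Fin n) :
    act s v x y = v (s⁻¹ x) (s⁻¹ y) := rfl

lemma act_add {n : ℕ} (s : Perm (Fin n)) (v w : VV n) : act s (v + w) = act s v + act s w := rfl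

@[simp] lemma act_zero {n : ℕ} (s : Perm (Fin n)) : act s (0 : VV n) = 0 := rfl

lemma act_one {n : ℕ} (v : VV n) : act 1 v = v := rfl

lemma act_mul {n : ℕ} (s t : Perm (Fin n)) (v : VV n) : act (s * t) v = act s (act t v) := by
  funext x y
  simp [act, Equiv.Perm.mul_apply]

/-- The wreath-like group recording pairwise crossing numbers and the permutation. -/
@[ext] structure GG (n : ℕ) where
  v : VV n
  s : Perm (Fin n)

instance (n : ℕ) : Mul (GG n) := ⟨fun a b => ⟨a.v + act a.s b.v, a.s * b.s⟩⟩
instance (n : ℕ) : One (GG n) := ⟨⟨0, 1⟩⟩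
instance (n : ℕ) : Inv (GG n) := ⟨fun a => ⟨-(act a.s⁻¹ a.v), a.s⁻¹⟩⟩

@[simp] lemma GG.mul_v {n : ℕ} (a b : GG n) : (a * b).v = a.v + act a.s b.v := rfl
@[simp] lemma GG.mul_s {n : ℕ} (a b : GG n) : (a * b).s = a.s * b.s := rfl
@[simp] lemma GG.one_v {n : ℕ} : (1 : GG n).v = 0 := rfl
@[simp] lemma GG.one_s {n : ℕ} : (1 : GG n).s = 1 := rfl
@[simp] lemma GG.inv_v {n : ℕ} (a : GG n) : (a⁻¹).v = -(act a.s⁻¹ a.v) := rfl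
@[simp] lemma GG.inv_s {n : ℕ} (a : GG n) : (a⁻¹).s = a.s⁻¹ := rfl

instance (n : ℕ) : Group (GG n) where
  mul := (· * ·)
  one := 1
  inv := (·⁻¹)
  mul_assoc a b c := by
    ext <;> simp [act_mul, act_add, add_assoc, mul_assoc]
  one_mul a := by ext <;> simp [act_one]
  mul_one a := by ext <;> simp
  inv_mul_cancel a := by
    ext x y
    · simp [← act_mul]
    · simp

lemma GG.pow_s {n : ℕ} (a : GG n) (m : ℕ) : (a ^ m).s = a.s ^ m := by
  induction m with
  | zero => simp
  | succ m ih => rw [pow_succ, pow_succ, GG.mul_s, ih]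

lemma GG.pow_v {n : ℕ} (a : GG n) (m : ℕ) :
    (a ^ m).v = ∑ t ∈ Finset.range m, act (a.s ^ t) a.v := by
  induction m with
  | zero => simp
  | succ m ih => rw [pow_succ, GG.mul_v, ih, Finset.sum_range_succ, GG.pow_s]

/-- basic symmetric elementary matrix, indexed by naturals -/
def ee {n : ℕ} (a b : ℕ) : VV n := fun x y =>
  if (x.1 = a ∧ y.1 = b) ∨ (x.1 = b ∧ y.1 = a) then 1 else 0

lemma ee_symm {n : ℕ} (a b : ℕ) : (ee a b : VV n) = ee b a := by
  funext x y; simp only [ee]; exact if_congr (by tauto) rfl rfl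

lemma ee_symm_apply {n : ℕ} (a b : ℕ) (x y : Fin n) : (ee a b : VV n) x y = ee a b y x := by
  simp only [ee]; exact if_congr (by tauto) rfl rfl

lemma act_ee {n : ℕ} (s : Perm (Fin n)) {a b : ℕ} (ha : a < n) (hb : b < n) :
    act s (ee a b : VV n) = ee (s ⟨a, ha⟩).1 (s ⟨b, hb⟩).1 := by
  funext x y
  have key : ∀ (z : Fin n) (c : ℕ) (hc : c < n), ((s⁻¹ z).1 = c ↔ z.1 = (s ⟨c, hc⟩).1) := by
    intro z c hc
    constructor
    · intro h
      have h2 : s⁻¹ z = ⟨c, hc⟩ := Fin.ext h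
      rw [← h2, Equiv.Perm.apply_inv_self']
    · intro h
      have h2 : z = s ⟨c, hc⟩ := Fin.ext h
      rw [h2, Equiv.Perm.inv_apply_self']
  simp only [act_apply, ee]
  exact if_congr (or_congr (and_congr (key x a ha) (key y b hb))
    (and_congr (key x b hb) (key y a ha))) rfl rfl

end BraidLower
namespace BraidLower
open Equiv

def genG (n : ℕ) (i : Fin (n - 1)) : GG n :=
  ⟨ee i.1 (i.1 + 1), Equiv.swap ⟨i.1, by omega⟩ ⟨i.1 + 1, by have := i.isLt; omega⟩⟩

lemma genG_rels {n : ℕ} : ∀ r ∈ braidRels n, FreeGroup.lift (genG n) r = 1 := by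
  rintro r (⟨⟨i, hi⟩, ⟨j, hj⟩, hij, rfl⟩ | ⟨⟨i, hi⟩, ⟨j, hj⟩, hij, rfl⟩) <;>
    simp only [map_mul, map_inv, FreeGroup.lift_apply_of, mul_inv_eq_one]
  · -- braid relation
    simp only [Fin.val_mk] at hij
    subst hij
    have hA : i < n := by omega
    have hB : i + 1 < n := by omega
    have hC : i + 1 + 1 < n := by omega
    have hAB : (⟨i, hA⟩ : Fin n) ≠ ⟨i+1, hB⟩ := by simp [Fin.ext_iff]
    have hAC : (⟨i, hA⟩ : Fin n) ≠ ⟨i+1+1, hC⟩ := by simp only [ne_eq, Fin.mk.injEq]; omega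
    have hBC : (⟨i+1, hB⟩ : Fin n) ≠ ⟨i+1+1, hC⟩ := by simp only [ne_eq, Fin.mk.injEq]; omega
    have t1 : act (Equiv.swap ⟨i, hA⟩ ⟨i+1, hB⟩) (ee (i+1) (i+1+1) : VV n) = ee i (i+1+1) := by
      rw [act_ee _ hB hC, Equiv.swap_apply_right,
        Equiv.swap_apply_of_ne_of_ne hAC.symm hBC.symm]
      try simp only [Fin.val_mk]
    have t2 : act (Equiv.swap ⟨i, hA⟩ ⟨i+1, hB⟩ * Equiv.swap ⟨i+1, hB⟩ ⟨i+1+1, hC⟩)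
        (ee i (i+1) : VV n) = ee (i+1) (i+1+1) := by
      rw [act_mul, act_ee _ hA hB, Equiv.swap_apply_of_ne_of_ne hAB hAC,
        Equiv.swap_apply_left]
      try simp only [Fin.val_mk]
      rw [act_ee _ hA hC, Equiv.swap_apply_left,
        Equiv.swap_apply_of_ne_of_ne hAC.symm hBC.symm]
      try simp only [Fin.val_mk]
    have t3 : act (Equiv.swap ⟨i+1, hB⟩ ⟨i+1+1, hC⟩) (ee i (i+1) : VV n) = ee i (i+1+1) := by
      rw [act_ee _ hA hB, Equiv.swap_apply_of_ne_of_ne hAB hAC, Equiv.swap_apply_left]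
      try simp only [Fin.val_mk]
    have t4 : act (Equiv.swap ⟨i+1, hB⟩ ⟨i+1+1, hC⟩ * Equiv.swap ⟨i, hA⟩ ⟨i+1, hB⟩)
        (ee (i+1) (i+1+1) : VV n) = ee i (i+1) := by
      rw [act_mul, act_ee _ hB hC, Equiv.swap_apply_right,
        Equiv.swap_apply_of_ne_of_ne hAC.symm hBC.symm]
      try simp only [Fin.val_mk]
      rw [act_ee _ hA hC, Equiv.swap_apply_of_ne_of_ne hAB hAC, Equiv.swap_apply_right]
      try simp only [Fin.val_mk]
    refine GG.ext ?_ ?_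
    · simp only [GG.mul_v, GG.mul_s, genG, Fin.val_mk]
      rw [t1, t2, t3, t4]
      abel
    · simp only [GG.mul_s, genG, Fin.val_mk]
      exact swap_braid hAB hAC hBC
  · -- commuting relation
    simp only [Fin.val_mk] at hij
    have hA : i < n := by omega
    have hB : i + 1 < n := by omega
    have hC : j < n := by omega
    have hD : j + 1 < n := by omega
    have h1 : (⟨i, hA⟩ : Fin n) ≠ ⟨j, hC⟩ := by simp only [ne_eq, Fin.mk.injEq]; omega
    have h2 : (⟨i, hA⟩ : Fin n) ≠ ⟨j+1, hD⟩ := by simp only [ne_eq, Fin.mk.injEq]; omega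
    have h3 : (⟨i+1, hB⟩ : Fin n) ≠ ⟨j, hC⟩ := by simp only [ne_eq, Fin.mk.injEq]; omega
    have h4 : (⟨i+1, hB⟩ : Fin n) ≠ ⟨j+1, hD⟩ := by simp only [ne_eq, Fin.mk.injEq]; omega
    have t1 : act (Equiv.swap ⟨i, hA⟩ ⟨i+1, hB⟩) (ee j (j+1) : VV n) = ee j (j+1) := by
      rw [act_ee _ hC hD, Equiv.swap_apply_of_ne_of_ne h1.symm h3.symm,
        Equiv.swap_apply_of_ne_of_ne h2.symm h4.symm]
      try simp only [Fin.val_mk]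
    have t2 : act (Equiv.swap ⟨j, hC⟩ ⟨j+1, hD⟩) (ee i (i+1) : VV n) = ee i (i+1) := by
      rw [act_ee _ hA hB, Equiv.swap_apply_of_ne_of_ne h1 h2,
        Equiv.swap_apply_of_ne_of_ne h3 h4]
      try simp only [Fin.val_mk]
    refine GG.ext ?_ ?_
    · simp only [GG.mul_v, GG.mul_s, genG, Fin.val_mk]
      rw [t1, t2]
      abel
    · simp only [GG.mul_s, genG, Fin.val_mk]
      exact (swap_commute h1 h2 h3 h4).eq

/-- The crossing-counting homomorphism. -/
def LL (n : ℕ) : BraidGroup n →* GG n := PresentedGroup.toGroup genG_rels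

lemma LL_u {n : ℕ} (r : ℕ) (h : r < n - 1) :
    LL n (u n r) = ⟨ee r (r + 1), Equiv.swap ⟨r, by omega⟩ ⟨r + 1, by omega⟩⟩ := by
  rw [u_eq r h]
  exact PresentedGroup.toGroup.of genG_rels

end BraidLower
namespace BraidLower

/-- The word `σ_{p+1} σ_{p+2} ⋯ σ_{p+l}` (0-based letters `p, …, p+l-1`). -/
def dd (n p l : ℕ) : BraidGroup n := ((List.range l).map (fun t => u n (p + t))).prod

@[simp] lemma dd_zero (n p : ℕ) : dd n p 0 = 1 := rfl

lemma dd_succ (n p l : ℕ) : dd n p (l + 1) = dd n p l * u n (p + l) := by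
  rw [dd, List.range_succ, List.map_append, List.prod_append, List.map_singleton,
    List.prod_singleton]
  rfl

lemma dd_one (n p : ℕ) : dd n p 1 = u n p := by
  rw [show (1:ℕ) = 0 + 1 from rfl, dd_succ, dd_zero, one_mul, Nat.add_zero]

lemma dd_add (n p a b : ℕ) : dd n p (a + b) = dd n p a * dd n (p + a) b := by
  induction b with
  | zero => simp
  | succ b ih =>
      have e : p + (a + b) = p + a + b := (Nat.add_assoc p a b).symm
      rw [← Nat.add_assoc, dd_succ, ih, dd_succ, mul_assoc, e]

lemma comm_u_dd_left {n j p : ℕ} (l : ℕ) (h : j + 2 ≤ p) : Commute (u n j) (dd n p l) := by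
  induction l with
  | zero => simpa using Commute.one_right _
  | succ l ih =>
      rw [dd_succ]
      exact ih.mul_right (u_comm (by omega))

lemma comm_u_dd_right {n j p : ℕ} (l : ℕ) (h : p + l + 1 ≤ j) : Commute (u n j) (dd n p l) := by
  induction l with
  | zero => simpa using Commute.one_right _
  | succ l ih =>
      rw [dd_succ]
      exact (ih (by omega)).mul_right (u_comm (by omega)).symm

lemma dd_shift {n p l r : ℕ} (hr1 : p ≤ r) (hr2 : r + 2 ≤ p + l) (hn : p + l ≤ n - 1) :
    dd n p l * u n r = u n (r + 1) * dd n p l := by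
  have hsplit : dd n p l = dd n p (r + 2 - p) * dd n (r + 2) (p + l - (r + 2)) := by
    have h1 : l = (r + 2 - p) + (p + l - (r + 2)) := by omega
    have h2 : p + (r + 2 - p) = r + 2 := by omega
    rw [show dd n p l = dd n p ((r + 2 - p) + (p + l - (r + 2))) by rw [← h1],
      dd_add, h2]
  have hhead : dd n p (r + 2 - p) = dd n p (r - p) * (u n r * u n (r + 1)) := by
    have h1 : r + 2 - p = (r - p) + 2 := by omega
    have h2 : p + (r - p) = r := by omega
    rw [h1, dd_add, h2]
    congr 1
    rw [show (2:ℕ) = 1 + 1 from rfl, dd_succ, dd_one, Nat.add_zero]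
  have hbraid : u n r * u n (r + 1) * u n r = u n (r + 1) * u n r * u n (r + 1) :=
    braid_rel r (by omega)
  have hc1 : Commute (u n r) (dd n (r + 2) (p + l - (r + 2))) :=
    comm_u_dd_left _ (by omega)
  have hc2 : Commute (u n (r + 1)) (dd n p (r - p)) :=
    comm_u_dd_right _ (by omega)
  calc dd n p l * u n r
      = dd n p (r + 2 - p) * (dd n (r + 2) (p + l - (r + 2)) * u n r) := by
        rw [hsplit, mul_assoc]
    _ = dd n p (r + 2 - p) * (u n r * dd n (r + 2) (p + l - (r + 2))) := by rw [← hc1.eq]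
    _ = (dd n p (r - p) * (u n r * u n (r + 1) * u n r)) *
          dd n (r + 2) (p + l - (r + 2)) := by
        rw [hhead]; group
    _ = (dd n p (r - p) * (u n (r + 1) * u n r * u n (r + 1))) *
          dd n (r + 2) (p + l - (r + 2)) := by rw [hbraid]
    _ = u n (r + 1) * (dd n p (r - p) * (u n r * u n (r + 1)) *
          dd n (r + 2) (p + l - (r + 2))) := by
        rw [show dd n p (r - p) * (u n (r + 1) * u n r * u n (r + 1)) =
          (dd n p (r - p) * u n (r + 1)) * (u n r * u n (r + 1)) by group,
          ← hc2.eq]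
        group
    _ = u n (r + 1) * dd n p l := by rw [← hhead, ← hsplit]

lemma dd_shift_pow {n p l : ℕ} (t j : ℕ) (h : t + j + 1 ≤ l) (hn : p + l ≤ n - 1) :
    (dd n p l) ^ j * u n (p + t) = u n (p + t + j) * (dd n p l) ^ j := by
  induction j with
  | zero => simp
  | succ j ih =>
      calc (dd n p l) ^ (j + 1) * u n (p + t)
          = dd n p l * ((dd n p l) ^ j * u n (p + t)) := by
            rw [pow_succ']; group
        _ = dd n p l * (u n (p + t + j) * (dd n p l) ^ j) := by rw [ih (by omega)]
        _ = (dd n p l * u n (p + t + j)) * (dd n p l) ^ j := by group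
        _ = (u n (p + t + j + 1) * dd n p l) * (dd n p l) ^ j := by
            rw [dd_shift (by omega) (by omega) hn]
        _ = u n (p + t + (j + 1)) * (dd n p l) ^ (j + 1) := by
            rw [show p + t + (j + 1) = p + t + j + 1 by omega, pow_succ']
            group

lemma dd_B {n p : ℕ} (m : ℕ) (hn : p + m + 1 ≤ n - 1) :
    (dd n p (m + 1)) ^ 2 * u n (p + m) = u n p * (dd n p (m + 1)) ^ 2 := by
  induction m with
  | zero =>
      rw [dd_one, Nat.add_zero, ← pow_succ, ← pow_succ']
  | succ m ih =>
      have hq : p + (m + 1) = p + m + 1 := by omega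
      have hd : dd n p (m + 1 + 1) = dd n p (m + 1) * u n (p + m + 1) := by
        rw [dd_succ n p (m + 1), hq]
      have hd' : dd n p (m + 1) = dd n p m * u n (p + m) := dd_succ n p m
      have hcomm : Commute (u n (p + m + 1)) (dd n p m) := comm_u_dd_right _ (by omega)
      have hbraid : u n (p + m) * u n (p + m + 1) * u n (p + m) =
          u n (p + m + 1) * u n (p + m) * u n (p + m + 1) := braid_rel _ (by omega)
      set c := dd n p (m + 1 + 1) with hcdef
      set d := dd n p (m + 1) with hddef
      have K : u n (p + m + 1) * d * u n (p + m + 1) = d * u n (p + m + 1) * u n (p + m) := by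
        calc u n (p + m + 1) * d * u n (p + m + 1)
            = (u n (p + m + 1) * dd n p m) * (u n (p + m) * u n (p + m + 1)) := by
              rw [hd']; group
          _ = (dd n p m * u n (p + m + 1)) * (u n (p + m) * u n (p + m + 1)) := by
              rw [hcomm.eq]
          _ = dd n p m * (u n (p + m + 1) * u n (p + m) * u n (p + m + 1)) := by group
          _ = dd n p m * (u n (p + m) * u n (p + m + 1) * u n (p + m)) := by rw [← hbraid]
          _ = d * u n (p + m + 1) * u n (p + m) := by rw [hd']; group
      rw [hq]
      calc c ^ 2 * u n (p + m + 1)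
          = d * (u n (p + m + 1) * d * u n (p + m + 1)) * u n (p + m + 1) := by
            rw [hd, sq]; group
        _ = d * (d * u n (p + m + 1) * u n (p + m)) * u n (p + m + 1) := by rw [K]
        _ = d ^ 2 * (u n (p + m + 1) * u n (p + m) * u n (p + m + 1)) := by rw [sq]; group
        _ = d ^ 2 * (u n (p + m) * u n (p + m + 1) * u n (p + m)) := by rw [← hbraid]
        _ = (d ^ 2 * u n (p + m)) * u n (p + m + 1) * u n (p + m) := by group
        _ = (u n p * d ^ 2) * u n (p + m + 1) * u n (p + m) := by rw [ih (by omega)]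
        _ = u n p * d * (d * u n (p + m + 1) * u n (p + m)) := by rw [sq]; group
        _ = u n p * d * (u n (p + m + 1) * d * u n (p + m + 1)) := by rw [K]
        _ = u n p * c ^ 2 := by rw [hd, sq]; group

/-- The full twist on the strand interval `[p, p+l]`. -/
def Tw (n p l : ℕ) : BraidGroup n := (dd n p l) ^ (l + 1)

lemma tw_comm {n p l : ℕ} (t : ℕ) (ht : t < l) (hn : p + l ≤ n - 1) :
    Commute (Tw n p l) (u n (p + t)) := by
  rw [Commute, SemiconjBy, Tw]
  set c := dd n p l
  have hl : l + 1 = t + (2 + (l - 1 - t)) := by omega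
  have hpow : c ^ (l + 1) = c ^ t * (c ^ 2 * c ^ (l - 1 - t)) := by
    rw [hl, pow_add, pow_add]
  have hm : l = (l - 1) + 1 := by omega
  have step1 : c ^ (l - 1 - t) * u n (p + t) = u n (p + (l - 1)) * c ^ (l - 1 - t) := by
    have := dd_shift_pow (n := n) (p := p) (l := l) t (l - 1 - t) (by omega) hn
    rw [this]
    congr 2
    omega
  have step2 : c ^ 2 * u n (p + (l - 1)) = u n p * c ^ 2 := by
    have := dd_B (n := n) (p := p) (l - 1) (by omega)
    rw [← hm] at this
    exact this
  have step3 : c ^ t * u n p = u n (p + t) * c ^ t := by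
    have := dd_shift_pow (n := n) (p := p) (l := l) 0 t (by omega) hn
    simpa using this
  calc c ^ (l + 1) * u n (p + t)
      = c ^ t * (c ^ 2 * (c ^ (l - 1 - t) * u n (p + t))) := by rw [hpow]; group
    _ = c ^ t * (c ^ 2 * (u n (p + (l - 1)) * c ^ (l - 1 - t))) := by rw [step1]
    _ = c ^ t * (c ^ 2 * u n (p + (l - 1))) * c ^ (l - 1 - t) := by group
    _ = c ^ t * (u n p * c ^ 2) * c ^ (l - 1 - t) := by rw [step2]
    _ = (c ^ t * u n p) * c ^ 2 * c ^ (l - 1 - t) := by group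
    _ = (u n (p + t) * c ^ t) * c ^ 2 * c ^ (l - 1 - t) := by rw [step3]
    _ = u n (p + t) * c ^ (l + 1) := by rw [hpow]; group

lemma comm_Tw_u {n p l r : ℕ} (hn : p + l ≤ n - 1)
    (hr : (r + 2 ≤ p) ∨ (p ≤ r ∧ r < p + l) ∨ (p + l + 1 ≤ r)) :
    Commute (Tw n p l) (u n r) := by
  rcases hr with h | ⟨h1, h2⟩ | h
  · exact ((comm_u_dd_left l h).symm.pow_left _)
  · have : r = p + (r - p) := by omega
    rw [this]
    exact tw_comm (r - p) (by omega) hn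
  · exact ((comm_u_dd_right l h).symm.pow_left _)

end BraidLower
namespace BraidLower
open Equiv

lemma LL_dd_s {n p l : ℕ} (hn : p + l ≤ n - 1) (x : Fin n) :
    (((LL n) (dd n p l)).s x).1 =
      if x.1 < p ∨ p + l < x.1 then x.1 else if x.1 = p + l then p else x.1 + 1 := by
  induction l generalizing x with
  | zero =>
      rw [dd_zero, map_one, GG.one_s]
      simp only [Perm.one_apply]
      split_ifs <;> omega
  | succ l ih =>
      have hn' : p + l ≤ n - 1 := by omega
      have h1 : p + l < n - 1 := by omega
      have h1' : p + l < n := by omega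
      have h2' : p + l + 1 < n := by omega
      rw [dd_succ, map_mul, GG.mul_s, LL_u (p + l) h1, Perm.mul_apply]
      have hswap : ((Equiv.swap (⟨p + l, by omega⟩ : Fin n) ⟨p + l + 1, by omega⟩) x).1 =
          if x.1 = p + l then p + l + 1 else if x.1 = p + l + 1 then p + l else x.1 := by
        rw [Equiv.swap_apply_def]
        split_ifs with e1 e2 e3 e4 e5 <;>
          simp_all [Fin.ext_iff] <;> omega
      rw [ih hn' _]
      rw [hswap]
      split_ifs <;> omega

lemma LL_dd_s_out {n p l : ℕ} (hn : p + l ≤ n - 1) (x : Fin n)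
    (hx : x.1 < p ∨ p + l < x.1) : ((LL n) (dd n p l)).s x = x := by
  have := LL_dd_s hn x
  rw [if_pos hx] at this
  exact Fin.ext this

lemma LL_dd_s_pow_out {n p l : ℕ} (hn : p + l ≤ n - 1) (t : ℕ) (x : Fin n)
    (hx : x.1 < p ∨ p + l < x.1) : (((LL n) (dd n p l)).s ^ t) x = x := by
  induction t with
  | zero => rfl
  | succ t ih => rw [pow_succ', Perm.mul_apply, ih, LL_dd_s_out hn x hx]

lemma LL_dd_s_pow_inv_out {n p l : ℕ} (hn : p + l ≤ n - 1) (t : ℕ) (x : Fin n)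
    (hx : x.1 < p ∨ p + l < x.1) : ((((LL n) (dd n p l)).s ^ t))⁻¹ x = x := by
  have := LL_dd_s_pow_out hn t x hx
  rw [Perm.inv_eq_iff_eq]
  exact this.symm

lemma LL_dd_s_pow_inv_mem {n p l : ℕ} (hn : p + l ≤ n - 1) (t : ℕ) (x : Fin n)
    (hx : p ≤ x.1 ∧ x.1 ≤ p + l) :
    p ≤ (((((LL n) (dd n p l)).s ^ t))⁻¹ x).1 ∧ ((((LL n) (dd n p l)).s ^ t)⁻¹ x).1 ≤ p + l := by
  by_contra hcon
  set z := ((((LL n) (dd n p l)).s ^ t))⁻¹ x with hz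
  have hzout : z.1 < p ∨ p + l < z.1 := by omega
  have hx2 : ((((LL n) (dd n p l)).s ^ t)) z = z := LL_dd_s_pow_out hn t z hzout
  have hx3 : ((((LL n) (dd n p l)).s ^ t)) z = x := by
    rw [hz]
    exact Equiv.Perm.apply_inv_self' _ _
  have hzx : z = x := by rw [← hx2, hx3]
  rw [hzx] at hzout
  omega

lemma LL_dd_s_pow_orbit {n p l : ℕ} (hn : p + l ≤ n - 1) (hp : p < n) (t : ℕ) (ht : t ≤ l) :
    ((((LL n) (dd n p l)).s ^ t) ⟨p, hp⟩).1 = p + t := by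
  induction t with
  | zero => rfl
  | succ t ih =>
      rw [pow_succ', Perm.mul_apply]
      have hval := ih (by omega)
      have := LL_dd_s hn ((((LL n) (dd n p l)).s ^ t) ⟨p, hp⟩)
      rw [hval] at this
      rw [this]
      split_ifs <;> omega

lemma LL_dd_v {n p l : ℕ} (hn : p + l ≤ n - 1) (x y : Fin n) :
    ((LL n) (dd n p l)).v x y =
      (if x.1 = p ∧ p + 1 ≤ y.1 ∧ y.1 ≤ p + l then 1 else 0) +
      (if y.1 = p ∧ p + 1 ≤ x.1 ∧ x.1 ≤ p + l then 1 else 0) := by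
  induction l generalizing x y with
  | zero =>
      rw [dd_zero, map_one, GG.one_v]
      simp only [Pi.zero_apply]
      split_ifs <;> omega
  | succ l ih =>
      have hn' : p + l ≤ n - 1 := by omega
      have h1 : p + l < n - 1 := by omega
      have h1' : p + l < n := by omega
      have h2' : p + l + 1 < n := by omega
      rw [dd_succ, map_mul, GG.mul_v, LL_u (p + l) h1]
      have hact : act ((LL n) (dd n p l)).s (ee (p + l) (p + l + 1) : VV n) =
          ee p (p + l + 1) := by
        rw [act_ee _ h1' h2']
        have e1 : ((((LL n) (dd n p l)).s) (⟨p + l, h1'⟩ : Fin n)).1 = p := by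
          rw [LL_dd_s hn']
          simp only [Fin.val_mk]
          split_ifs <;> omega
        have e2 : ((((LL n) (dd n p l)).s) (⟨p + l + 1, h2'⟩ : Fin n)).1 = p + l + 1 := by
          rw [LL_dd_s hn']
          simp only [Fin.val_mk]
          split_ifs <;> omega
        rw [e1, e2]
      rw [hact]
      simp only [Pi.add_apply, ee]
      rw [ih hn' x y]
      split_ifs <;> omega

lemma LL_Tw_v {n p l : ℕ} (hn : p + l ≤ n - 1) (x y : Fin n) :
    ((LL n) (Tw n p l)).v x y =
      if x ≠ y ∧ p ≤ x.1 ∧ x.1 ≤ p + l ∧ p ≤ y.1 ∧ y.1 ≤ p + l then 2 else 0 := by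
  have hsum : ((LL n) (Tw n p l)).v x y =
      ∑ t ∈ Finset.range (l + 1), ((LL n) (dd n p l)).v ((((LL n) (dd n p l)).s ^ t)⁻¹ x) ((((LL n) (dd n p l)).s ^ t)⁻¹ y) := by
    rw [Tw, map_pow, GG.pow_v]
    rw [Finset.sum_apply, Finset.sum_apply]
    rfl
  rw [hsum]
  by_cases hx : x.1 < p ∨ p + l < x.1
  · rw [if_neg (by intro h; omega)]
    apply Finset.sum_eq_zero
    intro t _
    rw [LL_dd_s_pow_inv_out hn t x hx, LL_dd_v hn]
    split_ifs <;> omega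
  by_cases hy : y.1 < p ∨ p + l < y.1
  · rw [if_neg (by intro h; omega)]
    apply Finset.sum_eq_zero
    intro t _
    rw [LL_dd_s_pow_inv_out hn t y hy, LL_dd_v hn]
    split_ifs <;> omega
  by_cases hxy : x = y
  · subst hxy
    rw [if_neg (by intro h; exact h.1 rfl)]
    apply Finset.sum_eq_zero
    intro t _
    rw [LL_dd_v hn]
    split_ifs <;> omega
  · push_neg at hx hy
    rw [if_pos ⟨hxy, by omega, by omega, by omega, by omega⟩]
    have hp : p < n := by have := x.isLt; omega
    have hterm : ∀ t ∈ Finset.range (l + 1),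
        ((LL n) (dd n p l)).v ((((LL n) (dd n p l)).s ^ t)⁻¹ x) ((((LL n) (dd n p l)).s ^ t)⁻¹ y) =
          (if x.1 = p + t then (1:ℤ) else 0) + (if y.1 = p + t then (1:ℤ) else 0) := by
      intro t htmem
      rw [Finset.mem_range] at htmem
      have hmx := LL_dd_s_pow_inv_mem hn t x ⟨by omega, by omega⟩
      have hmy := LL_dd_s_pow_inv_mem hn t y ⟨by omega, by omega⟩
      have hne : ((((LL n) (dd n p l)).s ^ t)⁻¹ x).1 ≠ ((((LL n) (dd n p l)).s ^ t)⁻¹ y).1 := by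
        intro h
        exact hxy ((Equiv.injective _) (Fin.ext h))
      have horb : ((((LL n) (dd n p l)).s ^ t) ⟨p, hp⟩).1 = p + t := LL_dd_s_pow_orbit hn hp t (by omega)
      have hiffx : ((((LL n) (dd n p l)).s ^ t)⁻¹ x).1 = p ↔ x.1 = p + t := by
        constructor
        · intro h
          have h2 : (((LL n) (dd n p l)).s ^ t)⁻¹ x = ⟨p, hp⟩ := Fin.ext h
          rw [Perm.inv_eq_iff_eq] at h2
          rw [h2, horb]
        · intro h
          have h2 : x = (((LL n) (dd n p l)).s ^ t) ⟨p, hp⟩ := Fin.ext (by rw [horb]; exact h)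
          rw [← Perm.inv_eq_iff_eq] at h2
          rw [h2]
      have hiffy : ((((LL n) (dd n p l)).s ^ t)⁻¹ y).1 = p ↔ y.1 = p + t := by
        constructor
        · intro h
          have h2 : (((LL n) (dd n p l)).s ^ t)⁻¹ y = ⟨p, hp⟩ := Fin.ext h
          rw [Perm.inv_eq_iff_eq] at h2
          rw [h2, horb]
        · intro h
          have h2 : y = (((LL n) (dd n p l)).s ^ t) ⟨p, hp⟩ := Fin.ext (by rw [horb]; exact h)
          rw [← Perm.inv_eq_iff_eq] at h2
          rw [h2]
      rw [LL_dd_v hn]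
      have c1 : (((((LL n) (dd n p l)).s ^ t)⁻¹ x).1 = p ∧ p + 1 ≤ ((((LL n) (dd n p l)).s ^ t)⁻¹ y).1 ∧ ((((LL n) (dd n p l)).s ^ t)⁻¹ y).1 ≤ p + l)
          ↔ x.1 = p + t := by
        constructor
        · rintro ⟨h, -⟩
          exact hiffx.1 h
        · intro h
          have hzx := hiffx.2 h
          refine ⟨hzx, ?_, hmy.2⟩
          have := hmy.1
          omega
      have c2 : (((((LL n) (dd n p l)).s ^ t)⁻¹ y).1 = p ∧ p + 1 ≤ ((((LL n) (dd n p l)).s ^ t)⁻¹ x).1 ∧ ((((LL n) (dd n p l)).s ^ t)⁻¹ x).1 ≤ p + l)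
          ↔ y.1 = p + t := by
        constructor
        · rintro ⟨h, -⟩
          exact hiffy.1 h
        · intro h
          have hzy := hiffy.2 h
          refine ⟨hzy, ?_, hmx.2⟩
          have := hmx.1
          omega
      rw [if_congr c1 rfl rfl, if_congr c2 rfl rfl]
    rw [Finset.sum_congr rfl hterm, Finset.sum_add_distrib]
    have hx1 : ∀ t ∈ Finset.range (l + 1), (if x.1 = p + t then (1:ℤ) else 0)
        = if t = x.1 - p then (1:ℤ) else 0 := by
      intro t _
      split_ifs <;> omega
    have hy1 : ∀ t ∈ Finset.range (l + 1), (if y.1 = p + t then (1:ℤ) else 0)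
        = if t = y.1 - p then (1:ℤ) else 0 := by
      intro t _
      split_ifs <;> omega
    rw [Finset.sum_congr rfl hx1, Finset.sum_congr rfl hy1,
      Finset.sum_ite_eq' (Finset.range (l+1)) (x.1 - p) (fun _ => (1:ℤ)),
      Finset.sum_ite_eq' (Finset.range (l+1)) (y.1 - p) (fun _ => (1:ℤ)),
      if_pos (Finset.mem_range.2 (by omega)), if_pos (Finset.mem_range.2 (by omega))]
    norm_num

end BraidLower
namespace BraidLower
open Equiv

/-- block of a strand: strand 0 is block 0; strands 2j-1, 2j form block j. -/
def blk (v : ℕ) : ℕ := (v + 1) / 2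

/-- the braid `β = σ_2 σ_4² ⋯ σ_{2k}^k` (0-based partial products). -/
def Pm (k m : ℕ) : BraidGroup (2*k+1) :=
  ((List.range m).map (fun i => u (2*k+1) (2*i+1) ^ (i+1))).prod

lemma Pm_succ (k m : ℕ) : Pm k (m+1) = Pm k m * u (2*k+1) (2*m+1) ^ (m+1) := by
  rw [Pm, List.range_succ, List.map_append, List.prod_append, List.map_singleton,
    List.prod_singleton]
  rfl

lemma swap_pow_cases {α : Type*} [DecidableEq α] (a b : α) (t : ℕ) :
    (Equiv.swap a b) ^ t = 1 ∨ (Equiv.swap a b) ^ t = Equiv.swap a b := by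
  rcases Nat.even_or_odd t with ⟨c, hc⟩ | ⟨c, hc⟩
  · left
    rw [hc, show c + c = 2 * c by omega, pow_mul, sq, Equiv.swap_mul_self, one_pow]
  · right
    rw [hc, pow_succ, pow_mul, sq, Equiv.swap_mul_self, one_pow, one_mul]

lemma act_nsmul {n : ℕ} (s : Perm (Fin n)) (c : ℕ) (v : VV n) :
    act s (c • v) = c • act s v := rfl

lemma LL_bb_aux (k m : ℕ) (hm : m ≤ k) :
    (∀ x : Fin (2*k+1), 2*m + 1 ≤ x.1 → ((LL (2*k+1)) (Pm k m)).s x = x) ∧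
    (∀ x : Fin (2*k+1), blk (((LL (2*k+1)) (Pm k m)).s x).1 = blk x.1) ∧
    (∀ x y : Fin (2*k+1), ((LL (2*k+1)) (Pm k m)).v x y =
       if x.1 % 2 = 1 ∧ y.1 = x.1 + 1 ∧ y.1 ≤ 2*m then (((x.1+1)/2 : ℕ) : ℤ)
       else if y.1 % 2 = 1 ∧ x.1 = y.1 + 1 ∧ x.1 ≤ 2*m then (((y.1+1)/2 : ℕ) : ℤ) else 0) := by
  induction m with
  | zero =>
      refine ⟨?_, ?_, ?_⟩
      · intro x _
        show ((LL (2*k+1)) 1).s x = x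
        rw [map_one, GG.one_s, Perm.one_apply]
      · intro x
        show blk ((((LL (2*k+1)) 1).s) x).1 = blk x.1
        rw [map_one, GG.one_s, Perm.one_apply]
      · intro x y
        show ((LL (2*k+1)) 1).v x y = _
        rw [map_one, GG.one_v]
        simp only [Pi.zero_apply]
        split_ifs <;> omega
  | succ m ih =>
      obtain ⟨ihfix, ihblk, ihv⟩ := ih (by omega)
      have hA : 2*m+1 < 2*k+1 := by omega
      have hB : 2*m+1+1 < 2*k+1 := by omega
      have hAB : (⟨2*m+1, hA⟩ : Fin (2*k+1)) ≠ ⟨2*m+1+1, hB⟩ := by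
        simp only [ne_eq, Fin.mk.injEq]; omega
      have hr : 2*m+1 < 2*k+1 - 1 := by omega
      have hu := LL_u (n := 2*k+1) (2*m+1) hr
      -- value of the power
      have hupows : ((LL (2*k+1)) (u (2*k+1) (2*m+1)) ^ (m+1)).s =
          (Equiv.swap (⟨2*m+1, hA⟩ : Fin (2*k+1)) ⟨2*m+1+1, hB⟩) ^ (m+1) := by
        rw [GG.pow_s, hu]
      have hupowv : ((LL (2*k+1)) (u (2*k+1) (2*m+1)) ^ (m+1)).v =
          (m+1) • (ee (2*m+1) (2*m+1+1) : VV (2*k+1)) := by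
        rw [GG.pow_v, hu]
        have hconst : ∀ t ∈ Finset.range (m+1),
            act ((Equiv.swap (⟨2*m+1, hA⟩ : Fin (2*k+1)) ⟨2*m+1+1, hB⟩) ^ t)
              (ee (2*m+1) (2*m+1+1) : VV (2*k+1)) = ee (2*m+1) (2*m+1+1) := by
          intro t _
          rcases swap_pow_cases (⟨2*m+1, hA⟩ : Fin (2*k+1)) ⟨2*m+1+1, hB⟩ t with h | h
          · rw [h, act_one]
          · rw [h, act_ee _ hA hB, Equiv.swap_apply_left, Equiv.swap_apply_right]
            simp only [Fin.val_mk]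
            exact ee_symm _ _
        rw [Finset.sum_congr rfl hconst, Finset.sum_const, Finset.card_range]
      have hPm := Pm_succ k m
      have hswapfix : ∀ z : Fin (2*k+1), z.1 ≠ 2*m+1 → z.1 ≠ 2*m+1+1 →
          ((Equiv.swap (⟨2*m+1, hA⟩ : Fin (2*k+1)) ⟨2*m+1+1, hB⟩) ^ (m+1)) z = z := by
        intro z h1 h2
        rcases swap_pow_cases (⟨2*m+1, hA⟩ : Fin (2*k+1)) ⟨2*m+1+1, hB⟩ (m+1) with h | h
        · rw [h, Perm.one_apply]
        · rw [h]
          exact Equiv.swap_apply_of_ne_of_ne (by simp [Fin.ext_iff]; omega)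
            (by simp [Fin.ext_iff]; omega)
      refine ⟨?_, ?_, ?_⟩
      · intro x hx
        rw [hPm, map_mul, GG.mul_s, map_pow, Perm.mul_apply, hupows,
          hswapfix x (by omega) (by omega)]
        exact ihfix x (by omega)
      · intro x
        rw [hPm, map_mul, GG.mul_s, map_pow, Perm.mul_apply, hupows]
        rcases swap_pow_cases (⟨2*m+1, hA⟩ : Fin (2*k+1)) ⟨2*m+1+1, hB⟩ (m+1) with h | h
        · rw [h, Perm.one_apply, ihblk]
        · rw [h, ihblk]
          rw [Equiv.swap_apply_def]
          split_ifs with e1 e2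
          · rw [e1]; simp only [Fin.val_mk, blk]; omega
          · rw [e2]; simp only [Fin.val_mk, blk]; omega
          · rfl
      · intro x y
        have hee : act ((LL (2*k+1)) (Pm k m)).s (ee (2*m+1) (2*m+1+1) : VV (2*k+1)) =
            ee (2*m+1) (2*m+1+1) := by
          rw [act_ee _ hA hB, ihfix ⟨2*m+1, hA⟩ (by simp only [Fin.val_mk]; omega),
            ihfix ⟨2*m+1+1, hB⟩ (by simp only [Fin.val_mk]; omega)]
        rw [hPm, map_mul, GG.mul_v, map_pow, hupowv, act_nsmul, hee]
        simp only [Pi.add_apply, Pi.smul_apply]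
        simp only [ee, Fin.val_mk, smul_ite, smul_zero, nsmul_eq_mul, mul_one]
        rw [ihv]
        split_ifs <;> push_cast <;> omega

/-- `β` as an element of our development. -/
def bb (k : ℕ) : BraidGroup (2*k+1) := Pm k k

lemma LL_v_symm {n : ℕ} (g : BraidGroup n) (x y : Fin n) :
    ((LL n) g).v x y = ((LL n) g).v y x := by
  have key : ∀ z : FreeGroup (Fin (n-1)), ∀ x y : Fin n,
      ((FreeGroup.lift (genG n)) z).v x y = ((FreeGroup.lift (genG n)) z).v y x := by
    intro z
    induction z using FreeGroup.induction_on with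
    | C1 => intro x y; rw [map_one]; rfl
    | of i =>
        intro x y
        rw [FreeGroup.lift_apply_of]
        exact ee_symm_apply _ _ _ _
    | inv_of i ih =>
        intro x y
        rw [map_inv]
        simp only [GG.inv_v, Pi.neg_apply, neg_inj, act_apply]
        exact ih _ _
    | mul a b iha ihb =>
        intro x y
        rw [map_mul]
        simp only [GG.mul_v, Pi.add_apply, act_apply]
        rw [iha, ihb]
  induction g using PresentedGroup.induction_on with
  | H z => exact key z x y

lemma blk_pres_inv {n : ℕ} (s : Perm (Fin n)) (h : ∀ x, blk (s x).1 = blk x.1) :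
    ∀ x, blk (s⁻¹ x).1 = blk x.1 := by
  intro x
  have := h (s⁻¹ x)
  rw [Equiv.Perm.apply_inv_self'] at this
  exact this.symm

end BraidLower
namespace BraidLower
open Equiv

lemma centralizer_blk {k : ℕ} (α : BraidGroup (2*k+1))
    (hcomm : α * bb k = bb k * α) :
    ∀ x : Fin (2*k+1), blk (((LL (2*k+1)) α).s x).1 = blk x.1 := by
  obtain ⟨hβfix, hβblk, hβv⟩ := LL_bb_aux k k le_rfl
  have hcomm' : α * Pm k k = Pm k k * α := hcomm
  have hE : (LL (2*k+1)) α * (LL (2*k+1)) (Pm k k) =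
      (LL (2*k+1)) (Pm k k) * (LL (2*k+1)) α := by
    rw [← map_mul, ← map_mul, hcomm']
  have hEv : ∀ x y : Fin (2*k+1),
      ((LL (2*k+1)) α).v x y + ((LL (2*k+1)) (Pm k k)).v ((((LL (2*k+1)) α).s)⁻¹ x)
        ((((LL (2*k+1)) α).s)⁻¹ y) =
      ((LL (2*k+1)) (Pm k k)).v x y + ((LL (2*k+1)) α).v ((((LL (2*k+1)) (Pm k k)).s)⁻¹ x)
        ((((LL (2*k+1)) (Pm k k)).s)⁻¹ y) := by
    intro x y
    have h1 := congrArg GG.v hE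
    rw [GG.mul_v, GG.mul_v] at h1
    have h2 := congrFun (congrFun h1 x) y
    simpa [act_apply] using h2
  -- the pair-preservation property
  have pairP : ∀ l, 1 ≤ l → l ≤ k →
      ∀ (hX : 2*l-1 < 2*k+1) (hY : 2*l < 2*k+1),
      ((((LL (2*k+1)) α).s)⁻¹ ⟨2*l-1, hX⟩ = ⟨2*l-1, hX⟩ ∧
        (((LL (2*k+1)) α).s)⁻¹ ⟨2*l, hY⟩ = ⟨2*l, hY⟩) ∨
      ((((LL (2*k+1)) α).s)⁻¹ ⟨2*l-1, hX⟩ = ⟨2*l, hY⟩ ∧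
        (((LL (2*k+1)) α).s)⁻¹ ⟨2*l, hY⟩ = ⟨2*l-1, hX⟩) := by
    intro l hl1 hlk hX hY
    set X : Fin (2*k+1) := ⟨2*l-1, hX⟩ with hXdef
    set Y : Fin (2*k+1) := ⟨2*l, hY⟩ with hYdef
    -- step 1 : v_alpha is invariant under s_beta⁻¹ on the pair
    have bX : blk ((((LL (2*k+1)) (Pm k k)).s)⁻¹ X).1 = blk X.1 :=
      blk_pres_inv _ hβblk X
    have bY : blk ((((LL (2*k+1)) (Pm k k)).s)⁻¹ Y).1 = blk Y.1 :=
      blk_pres_inv _ hβblk Y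
    have hXY : X ≠ Y := by simp [hXdef, hYdef, Fin.ext_iff]; omega
    have hneβ : ((((LL (2*k+1)) (Pm k k)).s)⁻¹ X).1 ≠ ((((LL (2*k+1)) (Pm k k)).s)⁻¹ Y).1 := by
      intro h
      exact hXY ((Equiv.injective _) (Fin.ext h))
    have hblkX : blk X.1 = l := by simp only [hXdef, Fin.val_mk, blk]; omega
    have hblkY : blk Y.1 = l := by simp only [hYdef, Fin.val_mk, blk]; omega
    have s2 : ((LL (2*k+1)) α).v ((((LL (2*k+1)) (Pm k k)).s)⁻¹ X)
        ((((LL (2*k+1)) (Pm k k)).s)⁻¹ Y) = ((LL (2*k+1)) α).v X Y := by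
      rw [hblkX] at bX
      rw [hblkY] at bY
      simp only [blk] at bX bY
      have hc : (((((LL (2*k+1)) (Pm k k)).s)⁻¹ X).1 = 2*l-1 ∧
          ((((LL (2*k+1)) (Pm k k)).s)⁻¹ Y).1 = 2*l) ∨
          (((((LL (2*k+1)) (Pm k k)).s)⁻¹ X).1 = 2*l ∧
          ((((LL (2*k+1)) (Pm k k)).s)⁻¹ Y).1 = 2*l-1) := by omega
      rcases hc with ⟨h1, h2⟩ | ⟨h1, h2⟩
      · rw [show (((LL (2*k+1)) (Pm k k)).s)⁻¹ X = X from Fin.ext (by rw [h1]),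
          show (((LL (2*k+1)) (Pm k k)).s)⁻¹ Y = Y from Fin.ext (by rw [h2])]
      · rw [show (((LL (2*k+1)) (Pm k k)).s)⁻¹ X = Y from Fin.ext (by rw [h1]),
          show (((LL (2*k+1)) (Pm k k)).s)⁻¹ Y = X from Fin.ext (by rw [h2])]
        exact LL_v_symm _ _ _
    -- step 2 : v_beta value at the inverse images under s_alpha
    have hvXY : ((LL (2*k+1)) (Pm k k)).v X Y = (l : ℤ) := by
      rw [hβv]
      rw [if_pos ⟨by simp only [hXdef, Fin.val_mk]; omega,
        by simp only [hXdef, hYdef, Fin.val_mk]; omega,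
        by simp only [hYdef, Fin.val_mk]; omega⟩]
      simp only [hXdef, Fin.val_mk]
      have h2l : (2*l-1+1)/2 = l := by omega
      rw [h2l]
    have s3 : ((LL (2*k+1)) (Pm k k)).v ((((LL (2*k+1)) α).s)⁻¹ X)
        ((((LL (2*k+1)) α).s)⁻¹ Y) = (l : ℤ) := by
      have := hEv X Y
      rw [s2, hvXY] at this
      linarith
    rw [hβv] at s3
    have hneα : ((((LL (2*k+1)) α).s)⁻¹ X).1 ≠ ((((LL (2*k+1)) α).s)⁻¹ Y).1 := by
      intro h
      exact hXY ((Equiv.injective _) (Fin.ext h))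
    split_ifs at s3 with c1 c2
    · left
      have e1 : ((((LL (2*k+1)) α).s)⁻¹ X).1 = 2*l-1 := by omega
      have e2 : ((((LL (2*k+1)) α).s)⁻¹ Y).1 = 2*l := by omega
      exact ⟨Fin.ext (by rw [e1]), Fin.ext (by rw [e2])⟩
    · right
      have e1 : ((((LL (2*k+1)) α).s)⁻¹ X).1 = 2*l := by omega
      have e2 : ((((LL (2*k+1)) α).s)⁻¹ Y).1 = 2*l-1 := by omega
      exact ⟨Fin.ext (by rw [e1]), Fin.ext (by rw [e2])⟩
    · exfalso
      omega
  -- now conclude block preservation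
  intro x
  by_cases hx0 : x.1 = 0
  · -- x is the 0 strand
    set w := (((LL (2*k+1)) α).s) x with hw
    have hxw : (((LL (2*k+1)) α).s)⁻¹ w = x := by rw [hw, Equiv.Perm.inv_apply_self']
    by_contra hcon
    have hw2k : w.1 ≤ 2*k := by have := w.isLt; omega
    have hblk0 : blk x.1 = 0 := by simp only [blk, hx0]
    have hl1 : 1 ≤ blk w.1 := by
      rcases Nat.eq_zero_or_pos (blk w.1) with h | h
      · rw [hblk0] at hcon; exact absurd h hcon
      · exact h
    set l := blk w.1 with hldef
    have hlk : l ≤ k := by simp only [hldef, blk]; omega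
    have hX : 2*l-1 < 2*k+1 := by omega
    have hY : 2*l < 2*k+1 := by omega
    have hwvals : w.1 = 2*l-1 ∨ w.1 = 2*l := by simp only [hldef, blk] at *; omega
    rcases pairP l hl1 hlk hX hY with ⟨h1, h2⟩ | ⟨h1, h2⟩ <;>
      rcases hwvals with hv | hv
    · have : w = ⟨2*l-1, hX⟩ := Fin.ext hv
      rw [this, h1] at hxw
      rw [← hxw] at hx0
      simp only [Fin.val_mk] at hx0
      omega
    · have : w = ⟨2*l, hY⟩ := Fin.ext hv
      rw [this, h2] at hxw
      rw [← hxw] at hx0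
      simp only [Fin.val_mk] at hx0
      omega
    · have : w = ⟨2*l-1, hX⟩ := Fin.ext hv
      rw [this, h1] at hxw
      rw [← hxw] at hx0
      simp only [Fin.val_mk] at hx0
      omega
    · have : w = ⟨2*l, hY⟩ := Fin.ext hv
      rw [this, h2] at hxw
      rw [← hxw] at hx0
      simp only [Fin.val_mk] at hx0
      omega
  · -- x is in a genuine block
    have hx2k : x.1 ≤ 2*k := by have := x.isLt; omega
    set l := blk x.1 with hldef
    have hl1 : 1 ≤ l := by simp only [hldef, blk]; omega
    have hlk : l ≤ k := by simp only [hldef, blk]; omega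
    have hX : 2*l-1 < 2*k+1 := by omega
    have hY : 2*l < 2*k+1 := by omega
    have hxvals : x.1 = 2*l-1 ∨ x.1 = 2*l := by simp only [hldef, blk] at *; omega
    have goalform : ∀ z : Fin (2*k+1), (((LL (2*k+1)) α).s) x = z →
        (z.1 = 2*l-1 ∨ z.1 = 2*l) → blk ((((LL (2*k+1)) α).s) x).1 = blk x.1 := by
      intro z hz hzv
      rw [hz]
      simp only [hldef, blk]
      omega
    rcases pairP l hl1 hlk hX hY with ⟨h1, h2⟩ | ⟨h1, h2⟩ <;> rcases hxvals with hv | hv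
    · refine goalform ⟨2*l-1, hX⟩ ?_ (Or.inl rfl)
      rw [show x = ⟨2*l-1, hX⟩ from Fin.ext hv]
      have hc := congrArg ((LL (2*k+1)) α).s h1
      rw [Equiv.Perm.apply_inv_self'] at hc
      exact hc.symm
    · refine goalform ⟨2*l, hY⟩ ?_ (Or.inr rfl)
      rw [show x = ⟨2*l, hY⟩ from Fin.ext hv]
      have hc := congrArg ((LL (2*k+1)) α).s h2
      rw [Equiv.Perm.apply_inv_self'] at hc
      exact hc.symm
    · refine goalform ⟨2*l, hY⟩ ?_ (Or.inr rfl)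
      rw [show x = ⟨2*l-1, hX⟩ from Fin.ext hv, ← h2, Equiv.Perm.apply_inv_self']
    · refine goalform ⟨2*l-1, hX⟩ ?_ (Or.inl rfl)
      rw [show x = ⟨2*l, hY⟩ from Fin.ext hv, ← h1, Equiv.Perm.apply_inv_self']

end BraidLower
namespace BraidLower
open Equiv

/-- Index type for the coordinates: `k` internal twists plus pairs of blocks. -/
def Idx (k : ℕ) : Type := (Fin k) ⊕ {q : Fin (k+1) × Fin (k+1) // q.1 < q.2}

instance (k : ℕ) : Fintype (Idx k) := inferInstanceAs (Fintype ((Fin k) ⊕ _))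
instance (k : ℕ) : DecidableEq (Idx k) := inferInstanceAs (DecidableEq ((Fin k) ⊕ _))

/-- The strands belonging to a block. -/
def Bset (k c : ℕ) : Finset (Fin (2*k+1)) := Finset.univ.filter (fun x => blk x.1 = c)

lemma mem_Bset {k c : ℕ} (x : Fin (2*k+1)) : x ∈ Bset k c ↔ (x.1 + 1)/2 = c := by
  rw [Bset, Finset.mem_filter_univ]; rfl

lemma Bset_nonempty {k c : ℕ} (hc : c ≤ k) : (Bset k c).Nonempty := by
  refine ⟨⟨2*c, by omega⟩, ?_⟩
  rw [mem_Bset]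
  simp only [Fin.val_mk]
  omega

/-- The coordinates map. -/
def phi (k : ℕ) (g : BraidGroup (2*k+1)) : Idx k → ℚ := fun c =>
  match c with
  | .inl i => ((((LL (2*k+1)) g).v ⟨2*i.1+1, by have := i.isLt; omega⟩
      ⟨2*i.1+2, by have := i.isLt; omega⟩ : ℤ) : ℚ)
  | .inr q => ∑ x ∈ Bset k q.1.1.1, ∑ y ∈ Bset k q.1.2.1,
      ((((LL (2*k+1)) g).v x y : ℤ) : ℚ)

lemma v_pair_invariant {n : ℕ} (h' : BraidGroup n) (s : Perm (Fin n))
    (hs : ∀ x, blk (s x).1 = blk x.1) {l : ℕ} (hl : 1 ≤ l) (X Y : Fin n)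
    (hXv : X.1 = 2*l-1) (hYv : Y.1 = 2*l) :
    ((LL n) h').v (s⁻¹ X) (s⁻¹ Y) = ((LL n) h').v X Y := by
  have bX : blk (s⁻¹ X).1 = blk X.1 := blk_pres_inv s hs X
  have bY : blk (s⁻¹ Y).1 = blk Y.1 := blk_pres_inv s hs Y
  have hXY : X ≠ Y := by intro h; rw [h] at hXv; omega
  have hne : (s⁻¹ X).1 ≠ (s⁻¹ Y).1 := by
    intro h
    exact hXY ((Equiv.injective _) (Fin.ext h))
  rw [hXv] at bX
  rw [hYv] at bY
  simp only [blk] at bX bY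
  have hc : ((s⁻¹ X).1 = 2*l-1 ∧ (s⁻¹ Y).1 = 2*l) ∨
      ((s⁻¹ X).1 = 2*l ∧ (s⁻¹ Y).1 = 2*l-1) := by omega
  rcases hc with ⟨h1, h2⟩ | ⟨h1, h2⟩
  · rw [show s⁻¹ X = X from Fin.ext (by rw [h1, hXv]),
      show s⁻¹ Y = Y from Fin.ext (by rw [h2, hYv])]
  · rw [show s⁻¹ X = Y from Fin.ext (by rw [h1, hYv]),
      show s⁻¹ Y = X from Fin.ext (by rw [h2, hXv])]
    exact LL_v_symm _ _ _

lemma phi_mul {k : ℕ} (g h : BraidGroup (2*k+1))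
    (hg : ∀ x, blk (((LL (2*k+1)) g).s x).1 = blk x.1) :
    phi k (g * h) = phi k g + phi k h := by
  funext c
  rw [Pi.add_apply]
  have hval : ∀ x y : Fin (2*k+1), ((LL (2*k+1)) (g*h)).v x y =
      ((LL (2*k+1)) g).v x y +
        ((LL (2*k+1)) h).v ((((LL (2*k+1)) g).s)⁻¹ x) ((((LL (2*k+1)) g).s)⁻¹ y) := by
    intro x y
    rw [map_mul, GG.mul_v]
    rfl
  match c with
  | .inl i =>
      show ((((LL (2*k+1)) (g*h)).v _ _ : ℤ) : ℚ) = _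
      rw [hval]
      have := v_pair_invariant h (((LL (2*k+1)) g).s) hg (l := i.1+1)
        (by omega) ⟨2*i.1+1, by have := i.isLt; omega⟩ ⟨2*i.1+2, by have := i.isLt; omega⟩
        (by simp only [Fin.val_mk]; omega) (by simp only [Fin.val_mk]; omega)
      rw [this]
      push_cast
      rfl
  | .inr q =>
      show (∑ x ∈ Bset k q.1.1.1, ∑ y ∈ Bset k q.1.2.1,
        ((((LL (2*k+1)) (g*h)).v x y : ℤ) : ℚ)) = _
      have hstep : ∀ x ∈ Bset k q.1.1.1, ∀ y ∈ Bset k q.1.2.1,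
          ((((LL (2*k+1)) (g*h)).v x y : ℤ) : ℚ) =
            ((((LL (2*k+1)) g).v x y : ℤ) : ℚ) +
            ((((LL (2*k+1)) h).v ((((LL (2*k+1)) g).s)⁻¹ x)
              ((((LL (2*k+1)) g).s)⁻¹ y) : ℤ) : ℚ) := by
        intro x _ y _
        rw [hval]
        push_cast
        ring
      rw [Finset.sum_congr rfl (fun x hx => Finset.sum_congr rfl (hstep x hx))]
      have hsplit : ∀ x ∈ Bset k q.1.1.1, (∑ y ∈ Bset k q.1.2.1,
          (((((LL (2*k+1)) g).v x y : ℤ) : ℚ) +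
            ((((LL (2*k+1)) h).v ((((LL (2*k+1)) g).s)⁻¹ x)
              ((((LL (2*k+1)) g).s)⁻¹ y) : ℤ) : ℚ))) =
          (∑ y ∈ Bset k q.1.2.1, ((((LL (2*k+1)) g).v x y : ℤ) : ℚ)) +
          (∑ y ∈ Bset k q.1.2.1, ((((LL (2*k+1)) h).v ((((LL (2*k+1)) g).s)⁻¹ x)
              ((((LL (2*k+1)) g).s)⁻¹ y) : ℤ) : ℚ)) :=
        fun x _ => Finset.sum_add_distrib
      rw [Finset.sum_congr rfl hsplit, Finset.sum_add_distrib]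
      congr 1
      -- reindex the second sum by the permutation
      have hinvblk : ∀ x : Fin (2*k+1), blk ((((LL (2*k+1)) g).s)⁻¹ x).1 = blk x.1 :=
        blk_pres_inv _ hg
      have hmem : ∀ (c' : ℕ) (x : Fin (2*k+1)),
          x ∈ Bset k c' ↔ (((LL (2*k+1)) g).s)⁻¹ x ∈ Bset k c' := by
        intro c' x
        simp only [Bset, Finset.mem_filter, Finset.mem_univ, true_and]
        rw [hinvblk]
      refine Finset.sum_equiv ((((LL (2*k+1)) g).s)⁻¹ : Fin (2*k+1) ≃ Fin (2*k+1))
        (fun x => hmem _ x) ?_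
      intro x _
      refine Finset.sum_equiv ((((LL (2*k+1)) g).s)⁻¹ : Fin (2*k+1) ≃ Fin (2*k+1))
        (fun y => hmem _ y) ?_
      intro y _
      rfl

lemma phi_one {k : ℕ} : phi k 1 = 0 := by
  funext c
  match c with
  | .inl i =>
      show ((((LL (2*k+1)) 1).v _ _ : ℤ) : ℚ) = 0
      rw [map_one, GG.one_v]
      rfl
  | .inr q =>
      show (∑ x ∈ Bset k q.1.1.1, ∑ y ∈ Bset k q.1.2.1,
        ((((LL (2*k+1)) 1).v x y : ℤ) : ℚ)) = 0
      rw [map_one, GG.one_v]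
      simp

lemma phi_inv {k : ℕ} (g : BraidGroup (2*k+1))
    (hg : ∀ x, blk (((LL (2*k+1)) g).s x).1 = blk x.1) :
    phi k g⁻¹ = - phi k g := by
  have h0 : phi k g + phi k g⁻¹ = 0 := by
    rw [← phi_mul g g⁻¹ hg, mul_inv_cancel, phi_one]
  exact eq_neg_of_add_eq_zero_right h0

end BraidLower
namespace BraidLower
open Equiv

/-- The interval full twist on blocks `a,…,b`. -/
def TT (k a b : ℕ) : BraidGroup (2*k+1) := Tw (2*k+1) (2*a-1) (2*b - (2*a-1))

lemma phi_u_inl {k : ℕ} (i j : Fin k) :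
    phi k (u (2*k+1) (2*i.1+1)) (.inl j) = if j = i then 1 else 0 := by
  show ((((LL (2*k+1)) (u (2*k+1) (2*i.1+1))).v ⟨2*j.1+1, _⟩ ⟨2*j.1+2, _⟩ : ℤ) : ℚ) = _
  rw [LL_u _ (by have := i.isLt; omega)]
  show (((ee (2*i.1+1) (2*i.1+1+1) : VV (2*k+1)) ⟨2*j.1+1, _⟩ ⟨2*j.1+2, _⟩ : ℤ) : ℚ) = _
  simp only [ee, Fin.val_mk]
  have hji : ((2*j.1+1 = 2*i.1+1 ∧ 2*j.1+2 = 2*i.1+1+1) ∨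
      (2*j.1+1 = 2*i.1+1+1 ∧ 2*j.1+2 = 2*i.1+1)) ↔ j = i := by
    rw [Fin.ext_iff]
    omega
  rw [if_congr hji rfl rfl]
  split_ifs <;> simp

lemma phi_u_inr {k : ℕ} (i : Fin k) (q : {q : Fin (k+1) × Fin (k+1) // q.1 < q.2}) :
    phi k (u (2*k+1) (2*i.1+1)) (.inr q) = 0 := by
  have hab : q.1.1.1 < q.1.2.1 := q.2
  show (∑ x ∈ Bset k q.1.1.1, ∑ y ∈ Bset k q.1.2.1, _) = (0 : ℚ)
  apply Finset.sum_eq_zero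
  intro x hx
  apply Finset.sum_eq_zero
  intro y hy
  rw [mem_Bset] at hx hy
  rw [LL_u _ (by have := i.isLt; omega)]
  show (((ee (2*i.1+1) (2*i.1+1+1) : VV (2*k+1)) x y : ℤ) : ℚ) = 0
  simp only [ee]
  rw [if_neg]
  · simp
  · rintro (⟨h1, h2⟩ | ⟨h1, h2⟩) <;> omega

lemma phi_T_inr_zero {k a b : ℕ} (hab : a < b) (hbk : b ≤ k)
    (q : {q : Fin (k+1) × Fin (k+1) // q.1 < q.2})
    (hq : ¬(a ≤ q.1.1.1 ∧ q.1.2.1 ≤ b)) :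
    phi k (TT k a b) (.inr q) = 0 := by
  have hcd : q.1.1.1 < q.1.2.1 := q.2
  have hn' : (2*a-1) + (2*b - (2*a-1)) ≤ 2*k+1 - 1 := by omega
  have hpl : (2*a-1) + (2*b - (2*a-1)) = 2*b := by omega
  have hdk : q.1.2.1 ≤ k := by have := q.1.2.isLt; omega
  show (∑ x ∈ Bset k q.1.1.1, ∑ y ∈ Bset k q.1.2.1, _) = (0 : ℚ)
  apply Finset.sum_eq_zero
  intro x hx
  apply Finset.sum_eq_zero
  intro y hy
  rw [mem_Bset] at hx hy
  rw [TT, LL_Tw_v hn']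
  rw [if_neg]
  · simp
  · rintro ⟨-, h1, h2, h3, h4⟩
    rw [hpl] at h2 h4
    omega

lemma phi_T_diag {k a b : ℕ} (hab : a < b) (hbk : b ≤ k)
    (q : {q : Fin (k+1) × Fin (k+1) // q.1 < q.2})
    (hqa : q.1.1.1 = a) (hqb : q.1.2.1 = b) :
    phi k (TT k a b) (.inr q) ≠ 0 := by
  have hn' : (2*a-1) + (2*b - (2*a-1)) ≤ 2*k+1 - 1 := by omega
  have hpl : (2*a-1) + (2*b - (2*a-1)) = 2*b := by omega
  have hterm : ∀ x ∈ Bset k q.1.1.1, ∀ y ∈ Bset k q.1.2.1,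
      ((((LL (2*k+1)) (TT k a b)).v x y : ℤ) : ℚ) = 2 := by
    intro x hx y hy
    rw [mem_Bset] at hx hy
    rw [hqa] at hx
    rw [hqb] at hy
    have hne : x ≠ y := by
      intro h
      rw [h] at hx
      omega
    rw [TT, LL_Tw_v hn']
    rw [if_pos ⟨hne, by omega, by omega, by omega, by omega⟩]
    norm_num
  show (∑ x ∈ Bset k q.1.1.1, ∑ y ∈ Bset k q.1.2.1,
    ((((LL (2*k+1)) (TT k a b)).v x y : ℤ) : ℚ)) ≠ 0
  rw [Finset.sum_congr rfl (fun x hx => Finset.sum_congr rfl (fun y hy => hterm x hx y hy))]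
  rw [Finset.sum_congr rfl (fun x _ => Finset.sum_const (2:ℚ)), Finset.sum_const]
  have hca : 0 < (Bset k q.1.1.1).card :=
    Finset.card_pos.2 (Bset_nonempty (by omega))
  have hcb : 0 < (Bset k q.1.2.1).card :=
    Finset.card_pos.2 (Bset_nonempty (by omega))
  simp only [nsmul_eq_mul]
  have h1 : (((Bset k q.1.1.1).card : ℕ) : ℚ) ≠ 0 := Nat.cast_ne_zero.2 (by omega)
  have h2 : (((Bset k q.1.2.1).card : ℕ) : ℚ) ≠ 0 := Nat.cast_ne_zero.2 (by omega)
  exact mul_ne_zero h1 (mul_ne_zero h2 (by norm_num))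

/-- commuting with the whole product -/
lemma comm_Pm {k : ℕ} {x : BraidGroup (2*k+1)}
    (h : ∀ i, i < k → Commute x (u (2*k+1) (2*i+1))) : Commute x (Pm k k) := by
  apply Commute.list_prod_right
  intro y hy
  simp only [List.mem_map, List.mem_range] at hy
  obtain ⟨i, hik, rfl⟩ := hy
  exact (h i hik).pow_right _

lemma u_comm_Pm {k : ℕ} (i : Fin k) : Commute (u (2*k+1) (2*i.1+1)) (Pm k k) := by
  apply comm_Pm
  intro j hj
  rcases lt_trichotomy i.1 j with h | h | h
  · exact u_comm (by omega)
  · rw [h]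
  · exact (u_comm (by omega)).symm

lemma TT_comm_Pm {k a b : ℕ} (hab : a < b) (hbk : b ≤ k) :
    Commute (TT k a b) (Pm k k) := by
  apply comm_Pm
  intro j hj
  exact comm_Tw_u (by omega) (by omega)

/-- generic triangular independence lemma -/
lemma li_of_height {ι : Type*} [Fintype ι] [DecidableEq ι] (w : ι → ι → ℚ) (ht : ι → ℕ)
    (hdiag : ∀ c, w c c ≠ 0) (hoff : ∀ c d, d ≠ c → w c d ≠ 0 → ht d < ht c) :
    LinearIndependent ℚ w := by
  rw [linearIndependent_iff']
  intro s g hsum i hi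
  by_contra hgi
  have hne : (s.filter (fun j => g j ≠ 0)).Nonempty := ⟨i, Finset.mem_filter.2 ⟨hi, hgi⟩⟩
  obtain ⟨c0, hc0mem, hc0max⟩ := Finset.exists_max_image _ ht hne
  rw [Finset.mem_filter] at hc0mem
  have heval : ∑ j ∈ s, g j * w j c0 = 0 := by
    have := congrFun hsum c0
    rw [Finset.sum_apply] at this
    simpa using this
  rw [Finset.sum_eq_single c0] at heval
  · exact hc0mem.2 (by
      have := mul_eq_zero.1 heval
      rcases this with h | h
      · exact h
      · exact absurd h (hdiag c0))
  · intro j hj hjne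
    by_cases hgj : g j = 0
    · rw [hgj, zero_mul]
    · have hw : w j c0 = 0 := by
        by_contra hw
        have h1 := hoff j c0 (by
          intro h
          exact hjne (by rw [h])) hw
        have h2 := hc0max j (Finset.mem_filter.2 ⟨hj, hgj⟩)
        omega
      rw [hw, mul_zero]
  · intro hc0
    exact absurd hc0mem.1 hc0

end BraidLower
namespace BraidLower
open Equiv

def eltI (k : ℕ) : Idx k → BraidGroup (2*k+1)
  | .inl i => u (2*k+1) (2*i.1+1)
  | .inr q => TT k q.1.1.1 q.1.2.1

def htI (k : ℕ) : Idx k → ℕ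
  | .inl _ => 0
  | .inr q => q.1.2.1 - q.1.1.1

lemma rows_li (k : ℕ) : LinearIndependent ℚ (fun c => phi k (eltI k c)) := by
  apply li_of_height _ (htI k)
  · intro c
    match c with
    | .inl i =>
        show phi k (u (2*k+1) (2*i.1+1)) (.inl i) ≠ 0
        rw [phi_u_inl]
        simp
    | .inr q =>
        have hab : q.1.1.1 < q.1.2.1 := q.2
        have hbk : q.1.2.1 ≤ k := by have := q.1.2.isLt; omega
        exact phi_T_diag hab hbk q rfl rfl
  · intro c d hdc hne
    match c, d with
    | .inl i, .inl j =>
        exfalso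
        rw [show eltI k (Sum.inl i) = u (2*k+1) (2*i.1+1) from rfl, phi_u_inl] at hne
        split_ifs at hne with h
        · exact hdc (by rw [h])
        · exact hne rfl
    | .inl i, .inr q =>
        exfalso
        rw [show eltI k (Sum.inl i) = u (2*k+1) (2*i.1+1) from rfl, phi_u_inr] at hne
        exact hne rfl
    | .inr q, .inl j =>
        show htI k (.inl j) < htI k (.inr q)
        have hab : q.1.1.1 < q.1.2.1 := q.2
        show 0 < q.1.2.1 - q.1.1.1
        omega
    | .inr q, .inr q' =>
        have hab : q.1.1.1 < q.1.2.1 := q.2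
        have hbk : q.1.2.1 ≤ k := by have := q.1.2.isLt; omega
        have hcd : q'.1.1.1 < q'.1.2.1 := q'.2
        have hbound : q.1.1.1 ≤ q'.1.1.1 ∧ q'.1.2.1 ≤ q.1.2.1 := by
          by_contra hb
          rw [show eltI k (Sum.inr q) = TT k q.1.1.1 q.1.2.1 from rfl,
            phi_T_inr_zero hab hbk q' hb] at hne
          exact hne rfl
        have hqq : ¬(q'.1.1.1 = q.1.1.1 ∧ q'.1.2.1 = q.1.2.1) := by
          rintro ⟨h1, h2⟩
          exact hdc (by
            congr 1
            apply Subtype.ext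
            apply Prod.ext <;> exact Fin.ext (by omega))
        show q'.1.2.1 - q'.1.1.1 < q.1.2.1 - q.1.1.1
        omega

end BraidLower
namespace BraidLower

lemma card_Idx (k : ℕ) : k * (k+3) / 2 ≤ Fintype.card (Idx k) := by
  have e : {q : Fin (k+1) × Fin (k+1) // q.1 < q.2} ≃ (Σ b : Fin (k+1), Fin b.1) :=
    { toFun := fun q => ⟨q.1.2, ⟨q.1.1.1, q.2⟩⟩
      invFun := fun p => ⟨(⟨p.2.1, by have := p.1.isLt; have := p.2.isLt; omega⟩, p.1), by
        rw [Fin.lt_def]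
        exact p.2.isLt⟩
      left_inv := fun q => rfl
      right_inv := fun p => rfl }
  have hcard : Fintype.card (Idx k) = k + ∑ i ∈ Finset.range (k+1), i := by
    rw [show Fintype.card (Idx k) = Fintype.card ((Fin k) ⊕ {q : Fin (k+1) × Fin (k+1) // q.1 < q.2}) from rfl, Fintype.card_sum,
      Fintype.card_fin, Fintype.card_congr e, Fintype.card_sigma]
    congr 1
    rw [← Fin.sum_univ_eq_sum_range (fun i => i) (k+1)]
    congr 1
    funext b
    rw [Fintype.card_fin]
  set s0 := ∑ i ∈ Finset.range (k+1), i with hs0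
  have hG : s0 * 2 = (k+1) * ((k+1) - 1) := Finset.sum_range_id_mul_two (k+1)
  have e1 : (k+1) * ((k+1) - 1) = k*k + k := by
    rw [Nat.add_sub_cancel]
    ring
  rw [e1] at hG
  have e3 : k * (k+3) = k*k + k + 2*k := by ring
  have hM : k * (k+3) = (s0 + k) * 2 := by
    rw [e3, ← hG]
    omega
  rw [hM, hcard, Nat.mul_div_cancel _ (by omega)]
  omega

end BraidLower
/-- For `β = σ_2 σ_4² σ_6³ ⋯ σ_{2k}^k ∈ B_{2k+1}`, every generating set of
`Z(β)` has at least `k(k+3)/2` elements. -/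
theorem lee_example_odd_lower_bound (k : ℕ) (hk : 1 ≤ k)
    (β : BraidGroup (2 * k + 1))
    (hβ : β = ((List.range k).map
      (fun i => braidGen (2 * k + 1) (2 * i + 2) ^ (i + 1))).prod)
    (S : Set (BraidGroup (2 * k + 1)))
    (hS : Subgroup.closure S = Subgroup.centralizer {β}) :
    ((k * (k + 3) / 2 : ℕ) : Cardinal) ≤ Cardinal.mk S := by
  classical
  open BraidLower in
  have hβPm : β = Pm k k := by
    rw [hβ, Pm]
    congr 1
  have hcent : ∀ c : Idx k, eltI k c ∈ Subgroup.centralizer {β} := by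
    intro c
    rw [Subgroup.mem_centralizer_iff]
    intro x hx
    rw [Set.mem_singleton_iff] at hx
    subst hx
    rw [hβPm]
    match c with
    | .inl i => exact (u_comm_Pm i).symm.eq
    | .inr q =>
        have hab : q.1.1.1 < q.1.2.1 := q.2
        have hbk : q.1.2.1 ≤ k := by have := q.1.2.isLt; omega
        exact (TT_comm_Pm hab hbk).symm.eq
  have hblkS : ∀ γ ∈ Subgroup.centralizer {β},
      ∀ x, blk (((LL (2*k+1)) γ).s x).1 = blk x.1 := by
    intro γ hγ
    apply centralizer_blk
    have hb := Subgroup.mem_centralizer_iff.1 hγ β (Set.mem_singleton β)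
    rw [hβPm] at hb
    exact hb.symm
  set Xset : Set (Idx k → ℚ) := phi k '' S with hXset
  have hspan : ∀ γ ∈ Subgroup.closure S, phi k γ ∈ Submodule.span ℚ Xset := by
    intro γ hγ
    refine Subgroup.closure_induction ?_ ?_ ?_ ?_ hγ
    · intro x hx
      exact Submodule.subset_span ⟨x, hx, rfl⟩
    · rw [phi_one]
      exact Submodule.zero_mem _
    · intro x y hx hy ihx ihy
      rw [phi_mul x y (hblkS x (by rw [← hS]; exact hx))]
      exact Submodule.add_mem _ ihx ihy
    · intro x hx ihx
      rw [phi_inv x (hblkS x (by rw [← hS]; exact hx))]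
      exact Submodule.neg_mem _ ihx
  have hrows_mem : ∀ c : Idx k, phi k (eltI k c) ∈ Submodule.span ℚ Xset := fun c =>
    hspan _ (by rw [hS]; exact hcent c)
  by_cases hfin : S.Finite
  · haveI := hfin.fintype
    have hXfin : Xset.Finite := hfin.image _
    haveI : Module.Finite ℚ (Submodule.span ℚ Xset) := Module.Finite.span_of_finite ℚ hXfin
    haveI : Fintype Xset := hXfin.fintype
    set rows' : Idx k → Submodule.span ℚ Xset := fun c => ⟨phi k (eltI k c), hrows_mem c⟩
      with hrows'
    have li' : LinearIndependent ℚ rows' := by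
      apply LinearIndependent.of_comp (Submodule.span ℚ Xset).subtype
      exact rows_li k
    have hcard1 : Fintype.card (Idx k) ≤ Module.finrank ℚ (Submodule.span ℚ Xset) :=
      li'.fintype_card_le_finrank
    have hcard2 : Module.finrank ℚ (Submodule.span ℚ Xset) ≤ Xset.toFinset.card :=
      finrank_span_le_card Xset
    have hcard3 : Xset.toFinset.card ≤ S.toFinset.card := by
      have hsub : Xset.toFinset ⊆ S.toFinset.image (phi k) := by
        intro v hv
        rw [Set.mem_toFinset] at hv
        obtain ⟨x, hx, rfl⟩ := hv
        exact Finset.mem_image.2 ⟨x, Set.mem_toFinset.2 hx, rfl⟩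
      calc Xset.toFinset.card ≤ (S.toFinset.image (phi k)).card := Finset.card_le_card hsub
        _ ≤ S.toFinset.card := Finset.card_image_le
    have hfinal : k * (k + 3) / 2 ≤ S.toFinset.card :=
      le_trans (card_Idx k) (le_trans hcard1 (le_trans hcard2 hcard3))
    rw [Cardinal.mk_fintype]
    have : S.toFinset.card = Fintype.card ↥S := Set.toFinset_card S
    rw [this] at hfinal
    exact_mod_cast hfinal
  · haveI : Infinite ↥S := Set.infinite_coe_iff.2 hfin
    exact le_trans (le_of_lt (Cardinal.nat_lt_aleph0 _)) (Cardinal.infinite_iff.1 inferInstance)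
end

section
/- Let X be a set and let f, g, h be pairwise commuting bijections of X. Let x ∈ X, and suppose that h(x) lies in the orbit of x under the subgroup of permutations of X generated by f and g. Then there exist integers k and l such that f^k ∘ g^l agrees with h at every point of the orbit of x under the subgroup generated by f and g. -/
/-- Every element of a subgroup generated by two commuting elements is `f^k * g^l`. -/
lemma mem_closure_pair_comm {G : Type*} [Group G] {f g : G} (hfg : Commute f g)
    {p : G} (hp : p ∈ Subgroup.closure ({f, g} : Set G)) :
    ∃ k l : ℤ, p = f ^ k * g ^ l := by
  induction hp using Subgroup.closure_induction with
  | mem a ha =>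
    rcases ha with rfl | rfl
    · exact ⟨1, 0, by simp⟩
    · exact ⟨0, 1, by simp⟩
  | one => exact ⟨0, 0, by simp⟩
  | mul a b _ _ ih1 ih2 =>
    obtain ⟨k1, l1, rfl⟩ := ih1
    obtain ⟨k2, l2, rfl⟩ := ih2
    refine ⟨k1 + k2, l1 + l2, ?_⟩
    rw [zpow_add, zpow_add, (hfg.symm.zpow_zpow l1 k2).mul_mul_mul_comm]
  | inv a _ ih =>
    obtain ⟨k, l, rfl⟩ := ih
    refine ⟨-k, -l, ?_⟩
    rw [mul_inv_rev, ← zpow_neg, ← zpow_neg, (hfg.zpow_zpow (-k) (-l)).eq]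

lemma commute_of_mem_closure_pair {G : Type*} [Group G] {f g c : G}
    (hcf : Commute c f) (hcg : Commute c g)
    {p : G} (hp : p ∈ Subgroup.closure ({f, g} : Set G)) : Commute c p := by
  induction hp using Subgroup.closure_induction with
  | mem a ha => rcases ha with rfl | rfl <;> assumption
  | one => exact Commute.one_right c
  | mul a b _ _ ih1 ih2 => exact ih1.mul_right ih2
  | inv a _ ih => exact ih.inv_right

/-- If `f, g, h` are pairwise commuting bijections of a set `X` and `h x`
lies in the orbit of `x` under the subgroup generated by `f` and `g`, then some `f^k ∘ g^l`
agrees with `h` on the whole orbit of `x` under that subgroup. -/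
theorem commuting_bijections_orbit_agreement {X : Type*} (f g h : Equiv.Perm X)
    (hfg : Commute f g) (hfh : Commute f h) (hgh : Commute g h) (x : X)
    (hx : h x ∈ MulAction.orbit (Subgroup.closure {f, g} : Subgroup (Equiv.Perm X)) x) :
    ∃ k l : ℤ, ∀ y ∈ MulAction.orbit (Subgroup.closure {f, g} : Subgroup (Equiv.Perm X)) x,
      (f ^ k * g ^ l) y = h y := by
  obtain ⟨⟨p, hp⟩, hpx⟩ := hx
  obtain ⟨k, l, rfl⟩ := mem_closure_pair_comm hfg hp
  refine ⟨k, l, ?_⟩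
  rintro y ⟨⟨q, hq⟩, rfl⟩
  have hqh : Commute h q := commute_of_mem_closure_pair hfh.symm hgh.symm hq
  have hwf : Commute (f ^ k * g ^ l) f :=
    (((Commute.refl f).zpow_left k).mul_left (hfg.symm.zpow_left l))
  have hwg : Commute (f ^ k * g ^ l) g :=
    ((hfg.zpow_left k).mul_left ((Commute.refl g).zpow_left l))
  have hqw : Commute (f ^ k * g ^ l) q := commute_of_mem_closure_pair hwf hwg hq
  have hx' : (f ^ k * g ^ l) x = h x := hpx
  show (f ^ k * g ^ l) (q x) = h (q x)
  calc (f ^ k * g ^ l) (q x) = ((f ^ k * g ^ l) * q) x := rfl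
    _ = (q * (f ^ k * g ^ l)) x := by rw [hqw.eq]
    _ = q ((f ^ k * g ^ l) x) := rfl
    _ = q (h x) := by rw [hx']
    _ = (q * h) x := rfl
    _ = (h * q) x := by rw [hqh.symm.eq]
    _ = h (q x) := rfl
end
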